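/- In the non-atomic meeting process, the worst-case meeting time is bounded by the potential: M̃_G(x,y) ≤ Φ̃(x,y) for all states x, y, where Φ̃(x,y) = H̃(x,ȳ) + H̃(y, s̄_h) − H̃(s_h, ȳ) for a hidden state s_h. -/

import Mathlib

set_option linter.unusedSectionVars false
set_option linter.unusedVariables false
set_option maxHeartbeats 2000000

open Finset

section VertexAux

variable {V : Type*} [Fintype V] [DecidableEq V] (G : SimpleGraph V) [DecidableRel G.Adj]

lemma aux_nf (u : V) : G.neighborFinset u = Finset.univ.filter (G.Adj u) := by
  ext w; simp

lemma aux_swap (F : V → V → ℝ) :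
    ∑ u, ∑ w ∈ G.neighborFinset u, F u w = ∑ u, ∑ w ∈ G.neighborFinset u, F w u := by
  simp only [aux_nf, Finset.sum_filter]
  rw [Finset.sum_comm]
  refine Finset.sum_congr rfl fun u _ => Finset.sum_congr rfl fun w _ => ?_
  simp [G.adj_comm]

lemma aux_walk_closed {V : Type*} (G : SimpleGraph V) (S : Set V)
    (hS : ∀ a b, G.Adj a b → a ∈ S → b ∈ S) :
    ∀ {a b : V} (p : G.Walk a b), a ∈ S → b ∈ S := by
  intro a b p
  induction p with
  | nil => exact id
  | cons hadj _ ih => exact fun ha => ih (hS _ _ hadj ha)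

lemma aux_mp_le (hconn : G.Connected) (d : V → ℝ) (v : V) (h0 : d v = 0)
    (hrec : ∀ u, u ≠ v → (G.degree u : ℝ) * d u = ∑ w ∈ G.neighborFinset u, d w) :
    ∀ u, d u ≤ 0 := by
  obtain ⟨u₀, -, hmax⟩ := Finset.univ.exists_max_image d ⟨v, Finset.mem_univ v⟩
  set Mx := d u₀ with hMx
  have hle : ∀ u, d u ≤ Mx := fun u => hmax u (Finset.mem_univ u)
  have prop : ∀ u, u ≠ v → d u = Mx → ∀ w ∈ G.neighborFinset u, d w = Mx := by
    intro u huv hu w hw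
    by_contra hne
    have hlt : d w < Mx := lt_of_le_of_ne (hle w) hne
    have hsum : ∑ w ∈ G.neighborFinset u, d w < ∑ _w ∈ G.neighborFinset u, Mx :=
      Finset.sum_lt_sum (fun i _ => hle i) ⟨w, hw, hlt⟩
    rw [Finset.sum_const, ← hrec u huv, hu] at hsum
    have : (G.neighborFinset u).card = G.degree u := rfl
    rw [this, nsmul_eq_mul] at hsum
    exact lt_irrefl _ hsum
  have hS : ∀ a b, G.Adj a b → (d v = Mx ∨ d a = Mx) → (d v = Mx ∨ d b = Mx) := by
    intro a b hadj ha
    rcases ha with ha | ha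
    · exact Or.inl ha
    · by_cases hav : a = v
      · exact Or.inl (hav ▸ ha)
      · exact Or.inr (prop a hav ha b ((G.mem_neighborFinset a b).mpr hadj))
  obtain ⟨p⟩ := hconn u₀ v
  have : d v = Mx := by
    have h2 := aux_walk_closed G {a | d v = Mx ∨ d a = Mx} hS p (Or.inr rfl)
    simpa using h2.elim id id
  intro u
  calc d u ≤ Mx := hle u
    _ = 0 := by rw [← this, h0]

lemma aux_mp (hconn : G.Connected) (d : V → ℝ) (v : V) (h0 : d v = 0)
    (hrec : ∀ u, u ≠ v → (G.degree u : ℝ) * d u = ∑ w ∈ G.neighborFinset u, d w) :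
    ∀ u, d u = 0 := by
  intro u
  have h1 := aux_mp_le G hconn d v h0 hrec u
  have h2 := aux_mp_le G hconn (fun z => -d z) v (by simp [h0])
    (fun u huv => by simp only [mul_neg, Finset.sum_neg_distrib]; rw [hrec u huv]) u
  simp only [neg_nonpos] at h2
  linarith

lemma aux_nbr_sum (h : V → V → ℝ) (hdiag : ∀ v, h v v = 0)
    (hrec : ∀ u v, u ≠ v → (G.degree u : ℝ) * h u v
      = 2 * G.degree u + ∑ w ∈ G.neighborFinset u, h w v) (v : V) :
    ∑ w ∈ G.neighborFinset v, h w v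
      = 2 * ((∑ u, (G.degree u : ℝ)) - G.degree v) := by
  have e0 : ∑ u, (G.degree u : ℝ) * h u v = ∑ u ∈ Finset.univ.erase v, (G.degree u : ℝ) * h u v := by
    rw [Finset.sum_erase _ (by rw [hdiag, mul_zero])]
  have e1 : ∑ u ∈ Finset.univ.erase v, (G.degree u : ℝ) * h u v
      = ∑ u ∈ Finset.univ.erase v, (2 * G.degree u + ∑ w ∈ G.neighborFinset u, h w v) :=
    Finset.sum_congr rfl fun u hu => hrec u v (Finset.ne_of_mem_erase hu)
  have e2 : ∑ u ∈ Finset.univ.erase v, ((2:ℝ) * G.degree u)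
      = 2 * (∑ u, (G.degree u : ℝ)) - 2 * G.degree v := by
    rw [Finset.sum_erase_eq_sub (Finset.mem_univ v), Finset.mul_sum]
  have e3 : ∑ u ∈ Finset.univ.erase v, (∑ w ∈ G.neighborFinset u, h w v)
      = (∑ u, ∑ w ∈ G.neighborFinset u, h w v) - ∑ w ∈ G.neighborFinset v, h w v := by
    rw [Finset.sum_erase_eq_sub (Finset.mem_univ v)]
  have e4 : ∑ u, ∑ w ∈ G.neighborFinset u, h w v = ∑ u, (G.degree u : ℝ) * h u v := by
    rw [aux_swap G (fun u w => h w v)]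
    refine Finset.sum_congr rfl fun u _ => ?_
    rw [Finset.sum_const, G.card_neighborFinset_eq_degree, nsmul_eq_mul]
  rw [Finset.sum_add_distrib, e2, e3, e4] at e1
  rw [e0] at e1
  linarith

/-- The operator `L + (1/n) J/n`-ish where `L` is the graph Laplacian. -/
noncomputable def auxT : (V → ℝ) →ₗ[ℝ] (V → ℝ) where
  toFun f := fun u => (G.degree u : ℝ) * f u - (∑ w ∈ G.neighborFinset u, f w)
    + (1 / (Fintype.card V : ℝ)) * ∑ z, f z
  map_add' f g := by
    funext u
    simp only [Pi.add_apply, Finset.sum_add_distrib, mul_add]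
    ring
  map_smul' c f := by
    funext u
    simp only [Pi.smul_apply, smul_eq_mul, RingHom.id_apply, ← Finset.mul_sum]
    ring

lemma auxT_apply (f : V → ℝ) (u : V) :
    auxT G f u = (G.degree u : ℝ) * f u - (∑ w ∈ G.neighborFinset u, f w)
      + (1 / (Fintype.card V : ℝ)) * ∑ z, f z := rfl

lemma auxT_sym (f g : V → ℝ) : ∑ u, auxT G f u * g u = ∑ u, f u * auxT G g u := by
  have hL : ∀ u : V, auxT G f u * g u
      = (G.degree u : ℝ) * f u * g u - (∑ w ∈ G.neighborFinset u, f w * g u)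
        + (1 / (Fintype.card V : ℝ)) * (∑ z, f z) * g u := by
    intro u
    rw [auxT_apply, ← Finset.sum_mul]
    ring
  have hR : ∀ u : V, f u * auxT G g u
      = (G.degree u : ℝ) * f u * g u - (∑ w ∈ G.neighborFinset u, f u * g w)
        + (1 / (Fintype.card V : ℝ)) * f u * (∑ z, g z) := by
    intro u
    rw [auxT_apply, ← Finset.mul_sum]
    ring
  simp only [hL, hR]
  rw [Finset.sum_add_distrib, Finset.sum_add_distrib, Finset.sum_sub_distrib,
    Finset.sum_sub_distrib, aux_swap G (fun u w => f w * g u)]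
  congr 1
  rw [show (∑ u, 1 / (Fintype.card V:ℝ) * (∑ z, f z) * g u)
      = 1 / (Fintype.card V:ℝ) * (∑ z, f z) * (∑ u, g u) from by rw [← Finset.mul_sum]]
  rw [show (∑ u, 1 / (Fintype.card V:ℝ) * f u * (∑ z, g z))
      = (∑ u, 1 / (Fintype.card V:ℝ) * f u) * (∑ z, g z) from by rw [← Finset.sum_mul]]
  try rw [← Finset.mul_sum]
  try ring

lemma auxT_one [Nonempty V] : auxT G (fun _ => (1:ℝ)) = fun _ => (1:ℝ) := by
  funext u
  rw [auxT_apply]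
  rw [Finset.sum_const, Finset.sum_const, G.card_neighborFinset_eq_degree]
  have hc : (0:ℝ) < (Fintype.card V : ℝ) := by
    exact_mod_cast Fintype.card_pos
  field_simp
  simp [nsmul_eq_mul, Finset.card_univ]

lemma auxT_inj (hconn : G.Connected) : Function.Injective (auxT G) := by
  haveI : Nonempty V := hconn.nonempty
  have key : ∀ f : V → ℝ, auxT G f = 0 → f = 0 := by
    intro f hf
    have hquad : ∑ u, f u * auxT G f u = 0 := by
      rw [hf]; simp
    have hexp : ∀ u : V, ∑ w ∈ G.neighborFinset u, (f u - f w)^2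
        = (G.degree u : ℝ) * f u ^ 2 - 2 * (∑ w ∈ G.neighborFinset u, f u * f w)
          + ∑ w ∈ G.neighborFinset u, f w ^ 2 := by
      intro u
      have : ∀ w : V, (f u - f w)^2 = f u ^2 - 2 * (f u * f w) + f w ^ 2 := fun w => by ring
      simp only [this]
      rw [Finset.sum_add_distrib, Finset.sum_sub_distrib, Finset.sum_const,
        G.card_neighborFinset_eq_degree, ← Finset.mul_sum, nsmul_eq_mul]
    have hsw : ∑ u, ∑ w ∈ G.neighborFinset u, (f w : ℝ)^2
        = ∑ u, (G.degree u : ℝ) * f u ^ 2 := by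
      rw [aux_swap G (fun u w => (f w)^2)]
      refine Finset.sum_congr rfl fun u _ => ?_
      rw [Finset.sum_const, G.card_neighborFinset_eq_degree, nsmul_eq_mul]
    have hRf : ∀ u : V, f u * auxT G f u
        = (G.degree u : ℝ) * f u ^ 2 - (∑ w ∈ G.neighborFinset u, f u * f w)
          + (1 / (Fintype.card V : ℝ)) * f u * (∑ z, f z) := by
      intro u
      rw [auxT_apply, ← Finset.mul_sum]
      ring
    have hq : ∑ u, f u * auxT G f u
        = (∑ u, (G.degree u:ℝ) * f u ^2) - (∑ u, ∑ w ∈ G.neighborFinset u, f u * f w)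
          + 1 / (Fintype.card V:ℝ) * (∑ z, f z) * (∑ z, f z) := by
      simp only [hRf]
      rw [Finset.sum_add_distrib, Finset.sum_sub_distrib]
      congr 1
      rw [show (∑ u, 1 / (Fintype.card V:ℝ) * f u * (∑ z, f z))
          = (∑ u, 1 / (Fintype.card V:ℝ) * f u) * (∑ z, f z) from by rw [← Finset.sum_mul]]
      try rw [← Finset.mul_sum]
      try ring
    have hw : ∑ u, ∑ w ∈ G.neighborFinset u, (f u - f w)^2
        = 2 * (∑ u, (G.degree u:ℝ) * f u ^2)
          - 2 * (∑ u, ∑ w ∈ G.neighborFinset u, f u * f w) := by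
      simp only [hexp]
      rw [Finset.sum_add_distrib, Finset.sum_sub_distrib, hsw, ← Finset.mul_sum]
      ring
    have hc : (0:ℝ) < 1 / (Fintype.card V : ℝ) := by
      have : (0:ℝ) < (Fintype.card V : ℝ) := by exact_mod_cast Fintype.card_pos
      positivity
    have hq1 : (0:ℝ) ≤ ∑ u, ∑ w ∈ G.neighborFinset u, (f u - f w)^2 :=
      Finset.sum_nonneg fun u _ => Finset.sum_nonneg fun w _ => sq_nonneg _
    have hq2 : (0:ℝ) ≤ (∑ z, f z)^2 := sq_nonneg _
    rw [hq] at hquad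
    have hZ1 : ∑ u, ∑ w ∈ G.neighborFinset u, (f u - f w)^2 = 0 := by nlinarith
    have hZ2 : (∑ z, f z) = 0 := by
      have : (∑ z, f z)^2 = 0 := by nlinarith
      exact pow_eq_zero_iff (by norm_num) |>.mp this
    have hadjeq : ∀ a b, G.Adj a b → f a = f b := by
      intro a b hab
      have h1 := (Finset.sum_eq_zero_iff_of_nonneg
        (fun u _ => Finset.sum_nonneg fun w _ => sq_nonneg (f u - f w))).mp hZ1 a (Finset.mem_univ a)
      have h2 := (Finset.sum_eq_zero_iff_of_nonneg (fun w _ => sq_nonneg (f a - f w))).mp h1 b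
        ((G.mem_neighborFinset a b).mpr hab)
      have := pow_eq_zero_iff (n := 2) (by norm_num) |>.mp h2
      linarith [sub_eq_zero.mp this]
    obtain ⟨a⟩ := ‹Nonempty V›
    have hconst : ∀ b, f b = f a := by
      intro bb
      obtain ⟨p⟩ := hconn a bb
      exact (aux_walk_closed G {x | f x = f a} (fun x y hxy hx => by
        simp only [Set.mem_setOf_eq] at *
        rw [← hadjeq x y hxy]; exact hx) p rfl)
    have hsum : ∑ z, f z = (Fintype.card V : ℝ) * f a := by
      rw [Finset.sum_congr rfl (fun z _ => hconst z), Finset.sum_const, Finset.card_univ,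
        nsmul_eq_mul]
    have hfa : f a = 0 := by
      have hcV : (0:ℝ) < (Fintype.card V : ℝ) := by exact_mod_cast Fintype.card_pos
      rw [hZ2] at hsum
      have := hsum.symm
      rcases mul_eq_zero.mp this with h | h
      · linarith
      · exact h
    funext u
    rw [hconst u, hfa]; rfl
  intro a b hab
  have : a - b = 0 := key (a - b) (by rw [map_sub, hab, sub_self])
  exact sub_eq_zero.mp this

theorem aux_cycle (hconn : G.Connected) (h : V → V → ℝ) (hdiag : ∀ v, h v v = 0)
    (hrec : ∀ u v, u ≠ v → (G.degree u : ℝ) * h u v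
      = 2 * G.degree u + ∑ w ∈ G.neighborFinset u, h w v) :
    ∃ ψ : V → ℝ, ∀ u v, h u v - h v u = ψ u - ψ v := by
  haveI : Nonempty V := hconn.nonempty
  have hinj := auxT_inj G hconn
  have hsurj := (LinearMap.injective_iff_surjective).mp hinj
  obtain ⟨Q, hQ⟩ : ∃ Q : (V → ℝ) →ₗ[ℝ] (V → ℝ), ∀ f, auxT G (Q f) = f := by
    refine ⟨(LinearEquiv.ofBijective (auxT G) ⟨hinj, hsurj⟩).symm.toLinearMap, fun f => ?_⟩
    have := (LinearEquiv.ofBijective (auxT G) ⟨hinj, hsurj⟩).apply_symm_apply f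
    exact this
  have hQsum : ∀ f : V → ℝ, ∑ u, Q f u = ∑ u, f u := by
    intro f
    have hs := auxT_sym G (fun _ => (1:ℝ)) (Q f)
    rw [auxT_one G, hQ f] at hs
    simpa using hs
  have hQsym : ∀ a b : V, Q (Pi.single a 1) b = Q (Pi.single b 1) a := by
    intro a b
    have hs := auxT_sym G (Q (Pi.single a 1)) (Q (Pi.single b 1))
    rw [hQ, hQ] at hs
    rw [Finset.sum_eq_single_of_mem a (Finset.mem_univ a) (fun c _ hc => by
        simp [Pi.single_apply, hc]),
      Finset.sum_eq_single_of_mem b (Finset.mem_univ b) (fun c _ hc => by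
        simp [Pi.single_apply, hc])] at hs
    simpa using hs.symm
  set S : ℝ := ∑ u, (G.degree u : ℝ) with hSdef
  set ev : V → (V → ℝ) := fun v => Pi.single v (1:ℝ) with hev
  set bb : V → ℝ := fun u => 2 * (G.degree u : ℝ) with hbb
  set φ : V → (V → ℝ) := fun v => Q (bb - (2*S) • ev v) with hφ
  have hsingle : ∀ (v u : V), ev v u = if u = v then (1:ℝ) else 0 := by
    intro v u; rw [hev]; simp [Pi.single_apply]
  have hφeval : ∀ v u, φ v u = Q bb u - (2*S) * Q (ev v) u := by
    intro v u
    rw [hφ]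
    simp only [map_sub, map_smul, Pi.sub_apply, Pi.smul_apply, smul_eq_mul]
  have hevsum : ∀ (v : V) (c : ℝ), ∑ u, c * ev v u = c := by
    intro v c
    rw [Finset.sum_eq_single_of_mem v (Finset.mem_univ v) (fun u _ hu => by
      simp [hsingle, hu])]
    simp [hsingle]
  have hφsum : ∀ v, ∑ u, φ v u = 0 := by
    intro v
    have e1 : ∑ u, φ v u = ∑ u, (bb u - (2*S) * ev v u) := by
      rw [hφ, hQsum]
      refine Finset.sum_congr rfl fun u _ => ?_
      simp only [Pi.sub_apply, Pi.smul_apply, smul_eq_mul]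
    rw [e1, Finset.sum_sub_distrib, hevsum v (2*S), hbb, ← Finset.mul_sum, ← hSdef, sub_self]
  have hφL : ∀ v u, u ≠ v → (G.degree u : ℝ) * φ v u - (∑ w ∈ G.neighborFinset u, φ v w)
      = 2 * (G.degree u : ℝ) := by
    intro v u huv
    have hT0 := congrFun (hQ (bb - (2*S) • ev v)) u
    rw [auxT_apply] at hT0
    have hT : (G.degree u : ℝ) * φ v u - (∑ w ∈ G.neighborFinset u, φ v w)
        + 1 / (Fintype.card V : ℝ) * ∑ z, φ v z = (bb - (2*S) • ev v) u := hT0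
    rw [hφsum v, mul_zero, add_zero] at hT
    rw [hT]
    simp only [Pi.sub_apply, Pi.smul_apply, smul_eq_mul]
    rw [hsingle v u, if_neg huv, hbb]
    ring
  set F : V → V → ℝ := fun u v => φ v u - φ v v with hF
  have hFrec : ∀ u v, u ≠ v → (G.degree u : ℝ) * F u v
      = 2 * G.degree u + ∑ w ∈ G.neighborFinset u, F w v := by
    intro u v huv
    rw [hF]
    simp only
    rw [show ∑ w ∈ G.neighborFinset u, (φ v w - φ v v)
        = (∑ w ∈ G.neighborFinset u, φ v w) - (G.degree u : ℝ) * φ v v from by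
      rw [Finset.sum_sub_distrib, Finset.sum_const, G.card_neighborFinset_eq_degree,
        nsmul_eq_mul]]
    have := hφL v u huv
    ring_nf
    ring_nf at this
    linarith
  have hhF : ∀ u v, h u v = F u v := by
    intro u v
    have := aux_mp G hconn (fun u => h u v - F u v) v (by
      show h v v - F v v = 0
      rw [hdiag v, hF]; simp) (by
      intro u huv
      show (G.degree u : ℝ) * (h u v - F u v) = ∑ w ∈ G.neighborFinset u, (h w v - F w v)
      rw [mul_sub, hrec u v huv, hFrec u v huv]
      rw [show ∑ w ∈ G.neighborFinset u, (h w v - F w v)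
          = (∑ w ∈ G.neighborFinset u, h w v) - ∑ w ∈ G.neighborFinset u, F w v from
        Finset.sum_sub_distrib _ _]
      rw [show ∑ w ∈ G.neighborFinset u, F w v
          = (∑ w ∈ G.neighborFinset u, φ v w) - ∑ w ∈ G.neighborFinset u, φ v v from by
        rw [← Finset.sum_sub_distrib]]
      ring) u
    simpa using sub_eq_zero.mp (by simpa using this)
  refine ⟨fun u => 2 * Q bb u - (2*S) * Q (ev u) u, fun u v => ?_⟩
  rw [hhF u v, hhF v u]
  have e1 : F u v = φ v u - φ v v := rfl
  have e2 : F v u = φ u v - φ u u := rfl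
  rw [e1, e2, hφeval v u, hφeval v v, hφeval u v, hφeval u u]
  have hsym2 : Q (ev u) v = Q (ev v) u := hQsym u v
  linear_combination (2*S) * hsym2

end VertexAux

/-- State space of the non-atomic walk: original vertices plus directed intermediate states. -/
def NAState (V : Type*) (G : SimpleGraph V) : Type _ :=
  V ⊕ {p : V × V // G.Adj p.1 p.2}

namespace NAState

variable {V : Type*} {G : SimpleGraph V}

/-- Original-vertex state. -/
def orig (v : V) : NAState V G := Sum.inl v

/-- Intermediate state `s_{ab}`, directed from `a` to `b`. -/
def intm (a b : V) (h : G.Adj a b) : NAState V G := Sum.inr ⟨(a, b), h⟩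

/-- Direction reversal: fixes original vertices, reverses intermediate states. -/
def bar : NAState V G → NAState V G
  | Sum.inl v => Sum.inl v
  | Sum.inr ⟨(a, b), h⟩ => Sum.inr ⟨(b, a), h.symm⟩

variable [Fintype V] [DecidableRel G.Adj]

/-- The number `d_s` of adjacent states of a state. -/
def asDeg : NAState V G → ℝ
  | Sum.inl v => (G.degree v : ℝ)
  | Sum.inr _ => 1

/-- Sum of `f` over the adjacent states `N_as(s)` of a state. -/
def asSum (f : NAState V G → ℝ) : NAState V G → ℝ
  | Sum.inl v => ∑ w ∈ (G.neighborFinset v).attach,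
      f (Sum.inr ⟨(v, w.1), (G.mem_neighborFinset _ _).mp w.2⟩)
  | Sum.inr ⟨(_, b), _⟩ => f (Sum.inl b)

end NAState

theorem stmt18 {V : Type*} [Fintype V] [DecidableEq V] (G : SimpleGraph V)
    [DecidableRel G.Adj] (hconn : G.Connected)
    (Ht : NAState V G → NAState V G → ℝ)
    (hHt0 : ∀ s, Ht s s = 0)
    (hHtorig : ∀ (v : V) (s : NAState V G), NAState.orig v ≠ s →
      Ht (NAState.orig v) s =
        1 + (1 / (G.degree v : ℝ)) * NAState.asSum (fun z => Ht z s) (NAState.orig v))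
    (hHtintm : ∀ (a b : V) (h : G.Adj a b) (s : NAState V G), NAState.intm a b h ≠ s →
      Ht (NAState.intm a b h) s = 1 + Ht (NAState.orig b) s)
    (hHtnn : ∀ s s' : NAState V G, 0 ≤ Ht s s')
    (sh : NAState V G) (hhidden : ∀ z : NAState V G, Ht sh z.bar ≤ Ht z sh.bar)
    (M : NAState V G → NAState V G → ℝ)
    (hMmeet : ∀ s s' : NAState V G, s' = s ∨ s' = s.bar → M s s' = 0)
    (hMsymm : ∀ s s' : NAState V G, M s s' = M s' s)
    (hMavg : ∀ s₁ s₂ : NAState V G, ¬ (s₂ = s₁ ∨ s₂ = s₁.bar) →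
      M s₁ s₂ = 1 + (1 / NAState.asDeg s₁) * NAState.asSum (fun z => M z s₂) s₁ ∨
      M s₁ s₂ = 1 + (1 / NAState.asDeg s₂) * NAState.asSum (fun z => M s₁ z) s₂)
    (x y : NAState V G) :
    M x y ≤ Ht x y.bar + Ht y sh.bar - Ht sh y.bar := by
  classical
  haveI : Nonempty V := hconn.nonempty
  haveI fNA : Fintype (NAState V G) := inferInstanceAs (Fintype (V ⊕ {p : V × V // G.Adj p.1 p.2}))
  haveI : DecidableEq (NAState V G) :=
    inferInstanceAs (DecidableEq (V ⊕ {p : V × V // G.Adj p.1 p.2}))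
  haveI : Nonempty (NAState V G) := ⟨Sum.inl (Classical.arbitrary V)⟩
  -- bar is an involution
  have bar_bar : ∀ s : NAState V G, s.bar.bar = s := by
    rintro (v | ⟨⟨a, b⟩, hab⟩) <;> rfl
  have bar_inl : ∀ v : V, NAState.bar (G := G) (Sum.inl v) = Sum.inl v := fun _ => rfl
  have bar_inr : ∀ (a b : V) (hab : G.Adj a b),
      NAState.bar (G := G) (Sum.inr ⟨(a,b),hab⟩) = Sum.inr ⟨(b,a),hab.symm⟩ := fun _ _ _ => rfl
  -- degrees are positive
  have degpos : ∀ u v : V, u ≠ v → 0 < G.degree u := by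
    intro u v huv
    obtain ⟨p⟩ := hconn u v
    cases p with
    | nil => exact absurd rfl huv
    | cons hadj _ => exact (G.degree_pos_iff_exists_adj u).mpr ⟨_, hadj⟩
  have degpos' : ∀ (v : V) (t : NAState V G), t ≠ Sum.inl v → 0 < G.degree v := by
    rintro v (u | ⟨⟨a, b⟩, hab⟩) ht
    · exact degpos v u (fun h => ht (by rw [h]))
    · rcases eq_or_ne v a with rfl | hva
      · exact degpos v b hab.ne
      · exact degpos v a hva
  -- the vertex-level hitting times
  set hh : V → V → ℝ := fun u v => Ht (Sum.inl u) (Sum.inl v) with hhdef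
  have hdiag : ∀ v, hh v v = 0 := fun v => hHt0 _
  have orig_eq : ∀ v : V, NAState.orig (G := G) v = Sum.inl v := fun _ => rfl
  have asSum_orig : ∀ (f : NAState V G → ℝ) (v : V),
      NAState.asSum f (NAState.orig v)
        = ∑ w ∈ (G.neighborFinset v).attach,
            f (Sum.inr ⟨(v, w.1), (G.mem_neighborFinset _ _).mp w.2⟩) := fun f v => rfl
  have horig' : ∀ (v : V) (s : NAState V G), Sum.inl v ≠ s → 0 < G.degree v →
      (G.degree v : ℝ) * Ht (Sum.inl v) s
        = G.degree v + ∑ w ∈ (G.neighborFinset v).attach,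
            Ht (Sum.inr ⟨(v, w.1), (G.mem_neighborFinset _ _).mp w.2⟩) s := by
    intro v s hne hd
    have hdR : ((G.degree v : ℝ)) ≠ 0 := by positivity
    have h1 := hHtorig v s hne
    rw [asSum_orig] at h1
    rw [orig_eq] at h1
    rw [h1]
    field_simp
    try ring
  have hintm' : ∀ (a b : V) (hab : G.Adj a b) (s : NAState V G),
      (Sum.inr ⟨(a,b),hab⟩ : NAState V G) ≠ s →
      Ht (Sum.inr ⟨(a,b),hab⟩) s = 1 + Ht (Sum.inl b) s := fun a b hab s hne =>
    hHtintm a b hab s hne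
  have hrec : ∀ u v, u ≠ v → (G.degree u : ℝ) * hh u v
      = 2 * G.degree u + ∑ w ∈ G.neighborFinset u, hh w v := by
    intro u v huv
    have hd := degpos u v huv
    have h1 := horig' u (Sum.inl v) (by simpa using huv) hd
    have h2 : ∑ w ∈ (G.neighborFinset u).attach,
        Ht (Sum.inr ⟨(u, w.1), (G.mem_neighborFinset _ _).mp w.2⟩ : NAState V G) (Sum.inl v)
        = ∑ w ∈ (G.neighborFinset u).attach, (1 + hh w.1 v) := by
      refine Finset.sum_congr rfl fun w _ => ?_
      rw [hintm' u w.1 _ (Sum.inl v) (by simp)]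
    rw [h2] at h1
    rw [Finset.sum_add_distrib, Finset.sum_const, Finset.card_attach,
      G.card_neighborFinset_eq_degree, nsmul_eq_mul, mul_one,
      Finset.sum_attach _ (fun w => hh w v)] at h1
    rw [hhdef]
    simp only
    rw [h1]
    ring
  set S : ℝ := ∑ u, (G.degree u : ℝ) with hSdef
  have nbr : ∀ v, ∑ w ∈ G.neighborFinset v, hh w v = 2 * (S - G.degree v) :=
    aux_nbr_sum G hh hdiag hrec
  obtain ⟨ψ, hψ⟩ := aux_cycle G hconn hh hdiag hrec
  have hh_eq : ∀ u v : V, hh u v = Ht (Sum.inl u) (Sum.inl v) := fun _ _ => rfl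
  have orig_rec : ∀ (v : V) (t : NAState V G), 0 < G.degree v → Sum.inl v ≠ t →
      (∀ (w : V) (hw : G.Adj v w), (Sum.inr ⟨(v,w),hw⟩ : NAState V G) ≠ t) →
      (G.degree v : ℝ) * Ht (Sum.inl v) t
        = 2 * G.degree v + ∑ w ∈ G.neighborFinset v, Ht (Sum.inl w) t := by
    intro v t hd hne hnint
    have h1 := horig' v t hne hd
    have h2 : ∑ w ∈ (G.neighborFinset v).attach,
        Ht (Sum.inr ⟨(v, w.1), (G.mem_neighborFinset _ _).mp w.2⟩ : NAState V G) t
        = ∑ w ∈ (G.neighborFinset v).attach, (1 + Ht (Sum.inl w.1) t) :=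
      Finset.sum_congr rfl fun w _ => hintm' v w.1 _ t (hnint w.1 _)
    rw [h2, Finset.sum_add_distrib, Finset.sum_const, Finset.card_attach,
      G.card_neighborFinset_eq_degree, nsmul_eq_mul, mul_one,
      Finset.sum_attach _ (fun w => Ht (Sum.inl w) t)] at h1
    rw [h1]
    ring
  have pass : ∀ (c d : V) (hcd : G.Adj c d) (s : NAState V G), s ≠ Sum.inr ⟨(c,d),hcd⟩ →
      Ht s (Sum.inr ⟨(c,d),hcd⟩)
        = Ht s (Sum.inl c) + Ht (Sum.inl c) (Sum.inr ⟨(c,d),hcd⟩) := by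
    intro c d hcd
    set T : NAState V G := (Sum.inr ⟨(c,d),hcd⟩ : NAState V G) with hT
    have erec : ∀ v, v ≠ c → (G.degree v : ℝ) * (Ht (Sum.inl v) T - hh v c - Ht (Sum.inl c) T)
        = ∑ w ∈ G.neighborFinset v, (Ht (Sum.inl w) T - hh w c - Ht (Sum.inl c) T) := by
      intro v hvc
      have hd := degpos v c hvc
      have h1 := orig_rec v T hd (by simp [hT]) (fun w hw => by
        simp only [hT, ne_eq, Sum.inr.injEq, Subtype.mk.injEq, Prod.mk.injEq]
        exact fun h => absurd h.1 hvc)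
      have h2 := orig_rec v (Sum.inl c) hd (by simpa using hvc) (fun w hw => by simp)
      simp only [hh_eq]
      rw [Finset.sum_sub_distrib, Finset.sum_sub_distrib, Finset.sum_const,
        G.card_neighborFinset_eq_degree, nsmul_eq_mul]
      linarith [h1, h2]
    have epass := aux_mp G hconn (fun v => Ht (Sum.inl v) T - hh v c - Ht (Sum.inl c) T) c
      (by beta_reduce; rw [hdiag c]; ring) erec
    intro s hs
    rcases s with u | ⟨⟨a,b⟩,hab⟩
    · have := epass u
      beta_reduce at this
      rw [hh_eq] at this
      linarith
    · rw [hintm' a b hab T hs]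
      rw [hintm' a b hab (Sum.inl c) (by simp)]
      have := epass b
      beta_reduce at this
      rw [hh_eq] at this
      linarith
  have Kval : ∀ (c d : V) (hcd : G.Adj c d),
      Ht (Sum.inl c) (Sum.inr ⟨(c,d),hcd⟩) = 2*S - 1 - hh d c := by
    intro c d hcd
    set T : NAState V G := (Sum.inr ⟨(c,d),hcd⟩ : NAState V G) with hT
    have hd : 0 < G.degree c := (G.degree_pos_iff_exists_adj c).mpr ⟨d, hcd⟩
    have h1 := horig' c T (by simp [hT]) hd
    have h2 : ∑ w ∈ (G.neighborFinset c).attach,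
        Ht (Sum.inr ⟨(c, w.1), (G.mem_neighborFinset _ _).mp w.2⟩ : NAState V G) T
        = ∑ w ∈ (G.neighborFinset c).attach,
            (if w.1 = d then 0 else 1 + hh w.1 c + Ht (Sum.inl c) T) := by
      refine Finset.sum_congr rfl fun w _ => ?_
      by_cases hwd : w.1 = d
      · rw [if_pos hwd]
        have hTw : (Sum.inr ⟨(c, w.1), (G.mem_neighborFinset _ _).mp w.2⟩ : NAState V G) = T := by
          rw [hT]
          congr 1
          exact Subtype.ext (by simp [hwd])
        rw [hTw, hHt0]
      · rw [if_neg hwd]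
        rw [hintm' c w.1 _ T (by
          simp only [hT, ne_eq, Sum.inr.injEq, Subtype.mk.injEq, Prod.mk.injEq]
          exact fun h => absurd h.2 hwd)]
        rw [pass c d hcd (Sum.inl w.1) Sum.inl_ne_inr]
        rw [← hT, hh_eq]
        ring
    rw [h2, Finset.sum_attach _ (fun w => if w = d then 0 else 1 + hh w c + Ht (Sum.inl c) T)] at h1
    have hdm : d ∈ G.neighborFinset c := (G.mem_neighborFinset c d).mpr hcd
    have h3 : ∑ w ∈ G.neighborFinset c, (if w = d then 0 else 1 + hh w c + Ht (Sum.inl c) T)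
        = (∑ w ∈ G.neighborFinset c, (1 + hh w c + Ht (Sum.inl c) T))
          - (1 + hh d c + Ht (Sum.inl c) T) := by
      rw [← Finset.sum_erase_add _ _ hdm,
        ← Finset.sum_erase_add _ (fun w => 1 + hh w c + Ht (Sum.inl c) T) hdm]
      rw [if_pos rfl]
      rw [Finset.sum_congr rfl (fun w hw => if_neg (Finset.ne_of_mem_erase hw))]
      ring
    rw [h3] at h1
    have h4 : ∑ w ∈ G.neighborFinset c, ((1:ℝ) + hh w c + Ht (Sum.inl c) T)
        = G.degree c * (1 + Ht (Sum.inl c) T) + 2*(S - G.degree c) := by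
      rw [Finset.sum_add_distrib, Finset.sum_add_distrib, Finset.sum_const, Finset.sum_const,
        nbr c, G.card_neighborFinset_eq_degree, nsmul_eq_mul]
      ring
    rw [h4] at h1
    linarith
  set PP : NAState V G → V := Sum.elim id (fun p => p.1.2) with hPP
  set aa : NAState V G → ℝ := Sum.elim (fun _ => 0) (fun _ => 1) with haa
  set kk : NAState V G → ℝ := Sum.elim (fun _ => 0) (fun p => 2*S - 1 - hh p.1.1 p.1.2) with hkk
  have PP_inl : ∀ v : V, PP (Sum.inl v) = v := fun _ => rfl
  have PP_inr : ∀ (a b : V) (hab : G.Adj a b), PP (Sum.inr ⟨(a,b),hab⟩) = b := fun _ _ _ => rfl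
  have aa_inl : ∀ v : V, aa (Sum.inl v) = 0 := fun _ => rfl
  have aa_inr : ∀ (a b : V) (hab : G.Adj a b), aa (Sum.inr ⟨(a,b),hab⟩) = 1 := fun _ _ _ => rfl
  have kk_inl : ∀ v : V, kk (Sum.inl v) = 0 := fun _ => rfl
  have kk_inr : ∀ (a b : V) (hab : G.Adj a b),
      kk (Sum.inr ⟨(a,b),hab⟩) = 2*S - 1 - hh a b := fun _ _ _ => rfl
  have master : ∀ (s t : NAState V G), ((∃ v, t = Sum.inl v) ∨ s ≠ t.bar) →
      Ht s t.bar = aa s + hh (PP s) (PP t) + kk t := by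
    rintro s (v | ⟨⟨cc,dd⟩,hcd⟩) hcond
    · rw [bar_inl]
      rcases s with u | ⟨⟨a,b⟩,hab⟩
      · rw [PP_inl, PP_inl, aa_inl, kk_inl, hh_eq]
        try ring
      · rw [hintm' a b hab (Sum.inl v) (by simp), PP_inr, PP_inl, aa_inr, kk_inl, hh_eq]
        try ring
    · have hsne : s ≠ NAState.bar (Sum.inr ⟨(cc,dd),hcd⟩) := by
        rcases hcond with ⟨v, hv⟩ | h
        · exact absurd hv (by simp)
        · exact h
      rw [bar_inr] at hsne ⊢
      rw [pass dd cc hcd.symm s hsne, Kval dd cc hcd.symm]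
      have hs2 : Ht s (Sum.inl dd) = aa s + hh (PP s) dd := by
        rcases s with u | ⟨⟨a,b⟩,hab⟩
        · rw [PP_inl, aa_inl, hh_eq]
          try ring
        · rw [hintm' a b hab (Sum.inl dd) (by simp), PP_inr, aa_inr, hh_eq]
          try ring
      rw [hs2, PP_inr, kk_inr]
      try ring
  set Φ : NAState V G → NAState V G → ℝ :=
    fun p q => Ht p q.bar + Ht q sh.bar - Ht sh q.bar with hΦ
  have Φ_eq : ∀ p q, Φ p q = Ht p q.bar + Ht q sh.bar - Ht sh q.bar := fun _ _ => rfl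
  have caseA : ∀ (p q : NAState V G), ¬(q = p ∨ q = NAState.bar p) →
      ∀ (c d : V) (hcd : G.Adj c d), sh = Sum.inr ⟨(c,d),hcd⟩ → q = NAState.bar sh →
      Φ p q = Φ q p := by
    intro p q hnm c d hcd hsh hq
    have hqval : q = Sum.inr ⟨(d,c),hcd.symm⟩ := by rw [hq, hsh, bar_inr]
    have hpq : q ≠ p := fun h => hnm (Or.inl h)
    have hpbar : q ≠ NAState.bar p := fun h => hnm (Or.inr h)
    have hpsh : p ≠ sh := by
      intro h
      apply hpbar
      rw [hq, h]
    have hpnesh : p ≠ NAState.bar sh := by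
      intro h
      exact hpq (hq.trans h.symm)
    have e1 : Φ p q = Ht p sh := by
      rw [Φ_eq]
      have hqbar : NAState.bar q = sh := by rw [hq, bar_bar]
      rw [hqbar, hq, hHt0, hHt0]
      ring
    rcases p with u | ⟨⟨a,b⟩,hab⟩
    · rw [e1, hsh]
      rw [pass c d hcd (Sum.inl u) Sum.inl_ne_inr, Kval c d hcd]
      rw [Φ_eq q (Sum.inl u), hqval, bar_inl]
      rw [hintm' d c hcd.symm (Sum.inl u) (by simp)]
      rw [hsh, bar_inr]
      rw [pass d c hcd.symm (Sum.inl u) Sum.inl_ne_inr, Kval d c hcd.symm]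
      rw [hintm' c d hcd (Sum.inl u) (by simp)]
      simp only [← hh_eq]
      linear_combination hψ u c - hψ u d + hψ c d
    · have hab_ne_cd : (Sum.inr ⟨(a,b),hab⟩ : NAState V G) ≠ Sum.inr ⟨(c,d),hcd⟩ := by
        rw [← hsh]; exact hpsh
      have hab_ne_dc : (Sum.inr ⟨(a,b),hab⟩ : NAState V G) ≠ Sum.inr ⟨(d,c),hcd.symm⟩ := by
        rw [← bar_inr c d hcd, ← hsh]; exact hpnesh
      have hdc_ne_ba : (Sum.inr ⟨(d,c),hcd.symm⟩ : NAState V G) ≠ Sum.inr ⟨(b,a),hab.symm⟩ := by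
        rw [← hqval, ← bar_inr a b hab]; exact hpbar
      have hcd_ne_ba : (Sum.inr ⟨(c,d),hcd⟩ : NAState V G) ≠ Sum.inr ⟨(b,a),hab.symm⟩ := by
        intro h
        apply hab_ne_dc
        have h2 := congrArg NAState.bar h
        rw [bar_inr, bar_inr] at h2
        exact h2.symm
      rw [e1, hsh]
      rw [pass c d hcd _ hab_ne_cd, Kval c d hcd]
      rw [hintm' a b hab (Sum.inl c) (by simp)]
      rw [Φ_eq q (Sum.inr ⟨(a,b),hab⟩), hqval, bar_inr]
      rw [hintm' d c hcd.symm _ hdc_ne_ba]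
      rw [pass b a hab.symm (Sum.inl c) Sum.inl_ne_inr, Kval b a hab.symm]
      rw [hsh, bar_inr]
      rw [pass d c hcd.symm _ hab_ne_dc, Kval d c hcd.symm]
      rw [hintm' a b hab (Sum.inl d) (by simp)]
      rw [hintm' c d hcd _ hcd_ne_ba]
      rw [pass b a hab.symm (Sum.inl d) Sum.inl_ne_inr]
      rw [Kval b a hab.symm]
      simp only [← hh_eq]
      linear_combination hψ b c - hψ b d + hψ c d
  have Phisymm : ∀ p q, ¬(q = p ∨ q = NAState.bar p) → Φ p q = Φ q p := by
    intro p q hnm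
    have hqp : q ≠ p := fun h => hnm (Or.inl h)
    have hqpb : q ≠ NAState.bar p := fun h => hnm (Or.inr h)
    have hpqb : p ≠ NAState.bar q := fun h => hqpb (by rw [h, bar_bar])
    by_cases hgen : ((∃ v, sh = Sum.inl v) ∨ q ≠ NAState.bar sh)
      ∧ ((∃ v, sh = Sum.inl v) ∨ p ≠ NAState.bar sh)
    · obtain ⟨hc1, hc2⟩ := hgen
      have c3 : (∃ v, q = Sum.inl v) ∨ sh ≠ NAState.bar q := by
        rcases hc1 with ⟨v, hv⟩ | h
        · by_cases hq : sh = NAState.bar q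
          · exact Or.inl ⟨v, by rw [← bar_bar q, ← hq, hv, bar_inl]⟩
          · exact Or.inr hq
        · exact Or.inr (fun hEq => h (by rw [hEq, bar_bar]))
      have c6 : (∃ v, p = Sum.inl v) ∨ sh ≠ NAState.bar p := by
        rcases hc2 with ⟨v, hv⟩ | h
        · by_cases hp : sh = NAState.bar p
          · exact Or.inl ⟨v, by rw [← bar_bar p, ← hp, hv, bar_inl]⟩
          · exact Or.inr hp
        · exact Or.inr (fun hEq => h (by rw [hEq, bar_bar]))
      have m1 := master p q (Or.inr hpqb)
      have m2 := master q sh hc1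
      have m3 := master sh q c3
      have m4 := master q p (Or.inr hqpb)
      have m5 := master p sh hc2
      have m6 := master sh p c6
      rw [Φ_eq, Φ_eq, m1, m2, m3, m4, m5, m6]
      linear_combination hψ (PP p) (PP q) + hψ (PP q) (PP sh) - hψ (PP p) (PP sh)
    · have hshint : ∃ (c d : V) (hcd : G.Adj c d), sh = Sum.inr ⟨(c,d),hcd⟩ := by
        rcases hns : sh with v | ⟨⟨c,d⟩,hcd⟩
        · exact absurd ⟨Or.inl ⟨v, hns⟩, Or.inl ⟨v, hns⟩⟩ hgen
        · exact ⟨c, d, hcd, rfl⟩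
      obtain ⟨c, d, hcd, hsh⟩ := hshint
      have hnoth : ¬((∃ v, sh = Sum.inl v)) := by
        rintro ⟨v, hv⟩
        rw [hsh] at hv
        exact absurd hv (by simp)
      rcases not_and_or.mp hgen with h1 | h2
      · have hqbar : q = NAState.bar sh := by
          by_contra hq
          exact h1 (Or.inr hq)
        exact caseA p q hnm c d hcd hsh hqbar
      · have hpbar : p = NAState.bar sh := by
          by_contra hp
          exact h2 (Or.inr hp)
        have hnm2 : ¬(p = q ∨ p = NAState.bar q) := by
          rintro (h | h)
          · exact hqp h.symm
          · exact hpqb h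
        exact (caseA q p hnm2 c d hcd hsh hpbar).symm
  have Phimeet : ∀ p q : NAState V G, (q = p ∨ q = NAState.bar p) → 0 ≤ Φ p q := by
    intro p q hm
    rcases hm with h | h
    · subst h
      rw [Φ_eq]
      have h1 := hhidden q
      have h2 := hHtnn q (NAState.bar q)
      linarith
    · subst h
      rw [Φ_eq, bar_bar, hHt0]
      have h1 := hhidden (NAState.bar p)
      rw [bar_bar] at h1
      linarith
  have Phiavg : ∀ (p q : NAState V G), p ≠ NAState.bar q →
      Φ p q = 1 + (1 / NAState.asDeg p) * NAState.asSum (fun z => Φ z q) p := by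
    intro p q hpq
    rcases p with v | ⟨⟨a,b⟩,hab⟩
    · have hd : 0 < G.degree v := by
        by_cases hex : ∃ u : V, u ≠ v
        · obtain ⟨u, hu⟩ := hex
          exact degpos v u (fun h => hu (h.symm))
        · push_neg at hex
          exfalso
          apply hpq
          rcases q with u | ⟨⟨a',b'⟩,hab'⟩
          · rw [bar_inl, hex u]
          · exact absurd ((hex a').trans (hex b').symm) (G.ne_of_adj hab')
      have hdR : (G.degree v : ℝ) ≠ 0 := by positivity
      have hAD : NAState.asDeg (Sum.inl v : NAState V G) = (G.degree v : ℝ) := rfl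
      rw [hAD]
      rw [show NAState.asSum (fun z => Φ z q) (Sum.inl v : NAState V G)
          = ∑ w ∈ (G.neighborFinset v).attach,
              Φ (Sum.inr ⟨(v, w.1), (G.mem_neighborFinset _ _).mp w.2⟩) q from rfl]
      have hsplit : ∑ w ∈ (G.neighborFinset v).attach,
          Φ (Sum.inr ⟨(v, w.1), (G.mem_neighborFinset _ _).mp w.2⟩) q
          = (∑ w ∈ (G.neighborFinset v).attach,
              Ht (Sum.inr ⟨(v, w.1), (G.mem_neighborFinset _ _).mp w.2⟩) (NAState.bar q))
            + (G.degree v : ℝ) * (Ht q sh.bar - Ht sh q.bar) := by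
        unfold Φ; beta_reduce
        rw [Finset.sum_sub_distrib, Finset.sum_add_distrib, Finset.sum_const,
          Finset.card_attach, G.card_neighborFinset_eq_degree, nsmul_eq_mul]
        try rw [Finset.sum_const, Finset.card_attach, G.card_neighborFinset_eq_degree,
          nsmul_eq_mul]
        ring
      rw [Φ_eq (Sum.inl v) q, hsplit]
      have h1 := horig' v (NAState.bar q) hpq hd
      field_simp
      linarith [h1]
    · have hAD : NAState.asDeg (Sum.inr ⟨(a,b),hab⟩ : NAState V G) = 1 := rfl
      have hAS : NAState.asSum (fun z => Φ z q) (Sum.inr ⟨(a,b),hab⟩ : NAState V G)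
          = Φ (Sum.inl b) q := rfl
      rw [hAD, hAS, Φ_eq (Sum.inr ⟨(a,b),hab⟩) q, Φ_eq (Sum.inl b) q]
      rw [hintm' a b hab (NAState.bar q) hpq]
      ring
  -- the maximum principle on pairs
  set D : NAState V G × NAState V G → ℝ := fun r => M r.1 r.2 - Φ r.1 r.2 with hD
  have Dval : ∀ a b : NAState V G, D (a, b) = M a b - Φ a b := fun _ _ => rfl
  obtain ⟨r₀, -, hr₀⟩ := Finset.univ.exists_max_image D
    ⟨((x, y) : NAState V G × NAState V G), Finset.mem_univ _⟩
  obtain ⟨c, hcdef⟩ : ∃ c : ℝ, D r₀ = c := ⟨D r₀, rfl⟩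
  have hbound : ∀ a b : NAState V G, M a b - Φ a b ≤ c := by
    intro a b
    have := hr₀ (a, b) (Finset.mem_univ _)
    rw [Dval] at this
    rwa [hcdef] at this
  have hgoal : c ≤ 0 → M x y ≤ Φ x y := by
    intro h
    have := hbound x y
    linarith
  have hcle : c ≤ 0 := by
    by_contra hcpos
    push_neg at hcpos
    set A : Finset (NAState V G × NAState V G) := Finset.univ.filter (fun r => D r = c) with hA
    have memA : ∀ r, r ∈ A ↔ D r = c := by
      intro r
      rw [hA, Finset.mem_filter]
      simp
    have hr₀A : r₀ ∈ A := (memA r₀).mpr hcdef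
    obtain ⟨r, hrA, hrmin⟩ := A.exists_min_image (fun r => Φ r.1 r.2) ⟨r₀, hr₀A⟩
    obtain ⟨px, py⟩ := r
    have hDr : M px py - Φ px py = c := by
      have := (memA _).mp hrA
      rwa [Dval] at this
    have hnm : ¬(py = px ∨ py = NAState.bar px) := by
      intro hm
      have h0 : M px py = 0 := hMmeet px py hm
      have h1 : 0 ≤ Φ px py := Phimeet px py hm
      linarith
    have hminr : ∀ a b : NAState V G, M a b - Φ a b = c → Φ px py ≤ Φ a b := by
      intro a b hab
      have : (a, b) ∈ A := (memA _).mpr (by rw [Dval]; exact hab)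
      exact hrmin (a, b) this
    have key : ∀ a b : NAState V G, M a b - Φ a b = c → ¬(b = a ∨ b = NAState.bar a) →
        Φ a b = Φ px py →
        M a b = 1 + (1 / NAState.asDeg a) * NAState.asSum (fun z => M z b) a → False := by
      intro a b hDab hnm' hminv hM
      have hanb : a ≠ NAState.bar b := fun h => hnm' (Or.inr (by rw [h, bar_bar]))
      have havg := Phiavg a b hanb
      rcases a with v | ⟨⟨a',b'⟩,hab'⟩
      · have hd : 0 < G.degree v := degpos' v b (fun h => hnm' (Or.inl h))
        have hdR : (G.degree v : ℝ) ≠ 0 := by positivity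
        have hMv : M (Sum.inl v) b = 1 + (1/(G.degree v:ℝ)) *
            ∑ w ∈ (G.neighborFinset v).attach,
              M (Sum.inr ⟨(v,w.1),(G.mem_neighborFinset _ _).mp w.2⟩) b := hM
        have hΦv : Φ (Sum.inl v) b = 1 + (1/(G.degree v:ℝ)) *
            ∑ w ∈ (G.neighborFinset v).attach,
              Φ (Sum.inr ⟨(v,w.1),(G.mem_neighborFinset _ _).mp w.2⟩) b := havg
        have hMv' : (G.degree v:ℝ) * M (Sum.inl v) b = G.degree v +
            ∑ w ∈ (G.neighborFinset v).attach,
              M (Sum.inr ⟨(v,w.1),(G.mem_neighborFinset _ _).mp w.2⟩) b := by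
          rw [hMv]
          field_simp
        have hΦv' : (G.degree v:ℝ) * Φ (Sum.inl v) b = G.degree v +
            ∑ w ∈ (G.neighborFinset v).attach,
              Φ (Sum.inr ⟨(v,w.1),(G.mem_neighborFinset _ _).mp w.2⟩) b := by
          rw [hΦv]
          field_simp
        have hsum0 : ∑ w ∈ (G.neighborFinset v).attach,
            (c - (M (Sum.inr ⟨(v,w.1),(G.mem_neighborFinset _ _).mp w.2⟩) b
              - Φ (Sum.inr ⟨(v,w.1),(G.mem_neighborFinset _ _).mp w.2⟩) b)) = 0 := by
          rw [Finset.sum_sub_distrib, Finset.sum_sub_distrib, Finset.sum_const,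
            Finset.card_attach, G.card_neighborFinset_eq_degree, nsmul_eq_mul]
          have : (G.degree v : ℝ) * c = (G.degree v : ℝ) * (M (Sum.inl v) b - Φ (Sum.inl v) b) := by
            rw [hDab]
          linarith [hMv', hΦv']
        have hterm : ∀ w ∈ (G.neighborFinset v).attach,
            M (Sum.inr ⟨(v,w.1),(G.mem_neighborFinset _ _).mp w.2⟩) b
              - Φ (Sum.inr ⟨(v,w.1),(G.mem_neighborFinset _ _).mp w.2⟩) b = c := by
          intro w hw
          have h1 := (Finset.sum_eq_zero_iff_of_nonneg (fun w _ => by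
            have := hbound (Sum.inr ⟨(v,w.1),(G.mem_neighborFinset _ _).mp w.2⟩ : NAState V G) b
            linarith)).mp hsum0 w hw
          linarith [h1]
        have hexw : ∃ w ∈ (G.neighborFinset v).attach,
            Φ (Sum.inr ⟨(v,w.1),(G.mem_neighborFinset _ _).mp w.2⟩) b ≤ Φ (Sum.inl v) b - 1 := by
          by_contra hno
          push_neg at hno
          have hne : ((G.neighborFinset v).attach).Nonempty := by
            rw [← Finset.card_pos, Finset.card_attach]
            exact hd
          have hlt : ∑ w ∈ (G.neighborFinset v).attach, (Φ (Sum.inl v) b - 1)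
              < ∑ w ∈ (G.neighborFinset v).attach,
                  Φ (Sum.inr ⟨(v,w.1),(G.mem_neighborFinset _ _).mp w.2⟩) b :=
            Finset.sum_lt_sum_of_nonempty hne (fun w _ => hno w (by simp))
          rw [Finset.sum_const, Finset.card_attach, G.card_neighborFinset_eq_degree,
            nsmul_eq_mul] at hlt
          nlinarith [hΦv', hlt]
        obtain ⟨w₀, hw₀, hw₀le⟩ := hexw
        have hDw := hterm w₀ hw₀
        have hminw := hminr _ _ hDw
        rw [← hminv] at hminw
        linarith
      · have hMv : M (Sum.inr ⟨(a',b'),hab'⟩) b = 1 + (1/(1:ℝ)) * M (Sum.inl b') b := hM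
        have hΦv : Φ (Sum.inr ⟨(a',b'),hab'⟩) b = 1 + (1/(1:ℝ)) * Φ (Sum.inl b') b := havg
        have hDz : M (Sum.inl b') b - Φ (Sum.inl b') b = c := by
          rw [hMv, hΦv] at hDab
          norm_num at hDab
          linarith
        have hminw := hminr _ _ hDz
        rw [← hminv] at hminw
        rw [hMv, hΦv] at hDab
        norm_num at hΦv
        linarith [hΦv]
    rcases hMavg px py hnm with hM1 | hM2
    · exact key px py hDr hnm rfl hM1
    · have hnm2 : ¬(px = py ∨ px = NAState.bar py) := by
        rintro (h | h)
        · exact hnm (Or.inl h.symm)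
        · exact hnm (Or.inr (by rw [h, bar_bar]))
      have hsymmM : M py px = M px py := hMsymm py px
      have hsymmΦ : Φ py px = Φ px py := (Phisymm px py hnm).symm
      have hD2 : M py px - Φ py px = c := by rw [hsymmM, hsymmΦ]; exact hDr
      have hM2' : M py px = 1 + (1 / NAState.asDeg py) * NAState.asSum (fun z => M z px) py := by
        rw [hsymmM, hM2]
        have : (fun z => M px z) = (fun z => M z px) := funext fun z => hMsymm px z
        rw [this]
      exact key py px hD2 hnm2 hsymmΦ hM2'
  exact hgoal hcle
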